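/- Let Ĥ = H ⊕ H with complex structure J, and let W ⊆ Ĥ be a cofinite isotropic subspace (JW ⊆ W⊥, with the reduced space H_W := (W ⊕ JW)⊥ finite dimensional). Let L be a lagrangian with L ∩ W = {0} and L + W closed. Then ℓ := P_{H_W}(L ∩ W^ω) is a lagrangian subspace of H_W, where W^ω := (JW)⊥ is the annihilator of W. Moreover the projection P_{H_W} restricted to L ∩ W^ω is injective with kernel computation Ker(P_{H_W}|_{L∩W^ω}) = L ∩ W = {0}. -/

import Mathlib

noncomputable section

variable (H : Type) [NormedAddCommGroup H] [InnerProductSpace ℂ H] [CompleteSpace H]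

/-- `Ĥ = H ⊕ H` with the Hilbert (l²) structure. -/
abbrev Hh := WithLp 2 (H × H)

/-- The complex structure `J(x,y) = (y, -x)` on `Ĥ = H ⊕ H`. -/
def hatJ : Hh H →L[ℂ] Hh H :=
  (WithLp.prodContinuousLinearEquiv 2 ℂ H H).symm.toContinuousLinearMap ∘L
    ((ContinuousLinearMap.snd ℂ H H).prod (-(ContinuousLinearMap.fst ℂ H H))) ∘L
    (WithLp.prodContinuousLinearEquiv 2 ℂ H H).toContinuousLinearMap

/-- A subspace `L ⊆ Ĥ` is lagrangian if `JL = L⊥`. -/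
def IsLagrangian (L : Submodule ℂ (Hh H)) : Prop :=
  L.map (hatJ H).toLinearMap = Lᗮ

/-- The annihilator `W^ω = (JW)⊥` of an isotropic subspace `W`. -/
def annihilator (W : Submodule ℂ (Hh H)) : Submodule ℂ (Hh H) :=
  (W.map (hatJ H).toLinearMap)ᗮ

/-- The symplectically reduced space `H_W = (W ⊕ JW)⊥`. -/
def reducedSpace (W : Submodule ℂ (Hh H)) : Submodule ℂ (Hh H) :=
  (W ⊔ W.map (hatJ H).toLinearMap)ᗮ

/-- The orthogonal projection of `Ĥ` onto `H_W`, viewed inside `Ĥ`. -/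
def reducedProj (W : Submodule ℂ (Hh H)) [Submodule.HasOrthogonalProjection (reducedSpace H W)] :
    Hh H →L[ℂ] Hh H :=
  (reducedSpace H W).subtypeL ∘L Submodule.orthogonalProjectionOnto (reducedSpace H W)

/-- The `∓i` eigenspaces `Ker (J ± i)` of `J`. -/
def eigenspace (s : ℂ) : Submodule ℂ (Hh H) :=
  LinearMap.ker ((hatJ H).toLinearMap + s • (LinearMap.id : Hh H →ₗ[ℂ] Hh H))

open scoped InnerProductSpace

set_option linter.unusedSectionVars false

lemma hatJ_fst (x : Hh H) : (hatJ H x).fst = x.snd := rfl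

lemma hatJ_snd (x : Hh H) : (hatJ H x).snd = -x.fst := rfl

lemma hatJ_hatJ (x : Hh H) : hatJ H (hatJ H x) = -x := by
  rw [WithLp.ext_iff]; apply Prod.ext <;> simp [hatJ_fst, hatJ_snd]

lemma inner_hatJ_hatJ (x y : Hh H) : ⟪hatJ H x, hatJ H y⟫_ℂ = ⟪x, y⟫_ℂ := by
  simp only [WithLp.prod_inner_apply, WithLp.ofLp_fst, WithLp.ofLp_snd]
  rw [hatJ_fst, hatJ_fst, hatJ_snd, hatJ_snd,
    inner_neg_neg]
  ring

lemma inner_hatJ_left (x y : Hh H) : ⟪hatJ H x, y⟫_ℂ = -⟪x, hatJ H y⟫_ℂ := by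
  have h := inner_hatJ_hatJ H x (hatJ H y)
  rw [hatJ_hatJ, inner_neg_right] at h
  exact neg_eq_iff_eq_neg.mp h

lemma inner_hatJ_right (x y : Hh H) : ⟪x, hatJ H y⟫_ℂ = -⟪hatJ H x, y⟫_ℂ := by
  rw [inner_hatJ_left]; ring

/-- let `W` be a cofinite isotropic subspace of `Ĥ` and `L` a lagrangian
with `L ∩ W = 0` and `L + W` closed. Then `P_{H_W}|_{L ∩ W^ω}` is injective with kernel
`L ∩ W = {0}`, and `ℓ := P_{H_W}(L ∩ W^ω)` is a lagrangian subspace of `H_W`. -/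
theorem symplectic_reduction_lagrangian (W : Submodule ℂ (Hh H))
    (hisoc : IsClosed (W : Set (Hh H)))
    (hiso : W.map (hatJ H).toLinearMap ≤ Wᗮ)
    [FiniteDimensional ℂ ↥(reducedSpace H W)]
    [Submodule.HasOrthogonalProjection (reducedSpace H W)]
    (hsigP : 2 * Module.finrank ℂ ↥(eigenspace H Complex.I ⊓ reducedSpace H W) =
      Module.finrank ℂ ↥(reducedSpace H W))
    (hsigM : 2 * Module.finrank ℂ ↥(eigenspace H (-Complex.I) ⊓ reducedSpace H W) =
      Module.finrank ℂ ↥(reducedSpace H W))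
    (L : Submodule ℂ (Hh H)) (hL : IsLagrangian H L)
    (hint : L ⊓ W = ⊥) (hclosed : IsClosed ((L ⊔ W : Submodule ℂ (Hh H)) : Set (Hh H))) :
    (∀ x ∈ L ⊓ annihilator H W, (reducedProj H W x = 0 ↔ x ∈ L ⊓ W)) ∧
    (∀ x ∈ L ⊓ annihilator H W, reducedProj H W x = 0 → x = 0) ∧
    (((L ⊓ annihilator H W).map (reducedProj H W).toLinearMap).map (hatJ H).toLinearMap =
      ((L ⊓ annihilator H W).map (reducedProj H W).toLinearMap)ᗮ ⊓ reducedSpace H W) := by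
  classical
  -- membership characterizations
  have memA : ∀ {x : Hh H}, x ∈ annihilator H W ↔ ∀ w ∈ W, ⟪hatJ H w, x⟫_ℂ = 0 := by
    intro x
    rw [annihilator, Submodule.mem_orthogonal]
    constructor
    · intro h w hw
      exact h _ (Submodule.mem_map_of_mem hw)
    · rintro h u ⟨w, hw, rfl⟩
      exact h w hw
  have memHW : ∀ {x : Hh H}, x ∈ reducedSpace H W ↔
      (∀ w ∈ W, ⟪w, x⟫_ℂ = 0) ∧ (∀ w ∈ W, ⟪hatJ H w, x⟫_ℂ = 0) := by
    intro x
    rw [reducedSpace, Submodule.mem_orthogonal]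
    constructor
    · intro h
      exact ⟨fun w hw => h w (Submodule.mem_sup_left hw),
        fun w hw => h _ (Submodule.mem_sup_right (Submodule.mem_map_of_mem hw))⟩
    · rintro ⟨h1, h2⟩ u hu
      rcases Submodule.mem_sup.mp hu with ⟨a, ha, b, hb, rfl⟩
      rcases hb with ⟨w, hw, rfl⟩
      rw [inner_add_left, h1 a ha]
      simpa using h2 w hw
  have hHWA : reducedSpace H W ≤ annihilator H W :=
    Submodule.orthogonal_le le_sup_right
  have hWA : W ≤ annihilator H W := by
    intro x hx
    refine memA.mpr fun w hw => ?_
    exact (Submodule.mem_orthogonal' _ _).mp (hiso (Submodule.mem_map_of_mem hw)) x hx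
  have hJHW : ∀ x ∈ reducedSpace H W, hatJ H x ∈ reducedSpace H W := by
    intro x hx
    rcases memHW.mp hx with ⟨h1, h2⟩
    refine memHW.mpr ⟨fun w hw => ?_, fun w hw => ?_⟩
    · rw [inner_hatJ_right]
      exact neg_eq_zero.mpr (h2 w hw)
    · rw [inner_hatJ_hatJ]
      exact h1 w hw
  -- basic facts about the reduced projection
  have hPapply : ∀ x : Hh H,
      reducedProj H W x = (Submodule.orthogonalProjectionOnto (reducedSpace H W) x : Hh H) := fun _ => rfl
  have hPmem : ∀ x : Hh H, reducedProj H W x ∈ reducedSpace H W := fun x =>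
    (Submodule.orthogonalProjectionOnto (reducedSpace H W) x).2
  have hPHW : ∀ x ∈ reducedSpace H W, reducedProj H W x = x := by
    intro x hx
    rw [hPapply]
    exact Submodule.starProjection_eq_self_iff.mpr hx
  have hPzero : ∀ x ∈ W ⊔ W.map (hatJ H).toLinearMap, reducedProj H W x = 0 := by
    intro x hx
    have hx' : x ∈ (reducedSpace H W)ᗮ :=
      (W ⊔ W.map (hatJ H).toLinearMap).le_orthogonal_orthogonal hx
    rw [hPapply, Submodule.orthogonalProjectionOnto_apply_of_mem_orthogonal hx']
    rfl
  -- key lemma: for x in the annihilator, x - P x ∈ W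
  haveI : CompleteSpace W := hisoc.completeSpace_coe
  have keyA : ∀ x ∈ annihilator H W, x - reducedProj H W x ∈ W := by
    intro x hx
    set w : Hh H := (Submodule.orthogonalProjectionOnto W x : Hh H) with hw
    have hwW : w ∈ W := (Submodule.orthogonalProjectionOnto W x).2
    have hker : x - w ∈ reducedSpace H W := by
      refine memHW.mpr ⟨fun u hu => ?_, fun u hu => ?_⟩
      · exact (Submodule.mem_orthogonal _ _).mp (Submodule.sub_starProjection_mem_orthogonal x) u hu
      · rw [inner_sub_right, memA.mp hx u hu]
        simp only [zero_sub, neg_eq_zero]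
        exact (Submodule.mem_orthogonal' _ _).mp (hiso (Submodule.mem_map_of_mem hu)) w hwW
    have hPx : reducedProj H W x = x - w := by
      have hx_eq : x = w + (x - w) := by abel
      conv_lhs => rw [hx_eq]
      rw [map_add, hPzero w (Submodule.mem_sup_left hwW), hPHW _ hker, zero_add]
    rw [hPx]
    simpa using hwW
  have hLJ : ∀ x ∈ L, hatJ H x ∈ Lᗮ := by
    intro x hx
    rw [← hL]
    exact Submodule.mem_map_of_mem hx
  -- Part 1
  have part1 : ∀ x ∈ L ⊓ annihilator H W, (reducedProj H W x = 0 ↔ x ∈ L ⊓ W) := by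
    rintro x ⟨hxL, hxA⟩
    constructor
    · intro h0
      have h := keyA x hxA
      rw [h0, sub_zero] at h
      exact ⟨hxL, h⟩
    · rintro ⟨-, hxW⟩
      exact hPzero x (Submodule.mem_sup_left hxW)
  have part2 : ∀ x ∈ L ⊓ annihilator H W, reducedProj H W x = 0 → x = 0 := by
    intro x hx h0
    have h := (part1 x hx).mp h0
    rw [hint] at h
    exact (Submodule.mem_bot ℂ).mp h
  refine ⟨part1, part2, ?_⟩
  -- Part 3
  ext z
  simp only [Submodule.mem_inf, Submodule.mem_map, ContinuousLinearMap.coe_coe]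
  constructor
  · rintro ⟨p, ⟨x, ⟨hxL, hxA⟩, rfl⟩, rfl⟩
    refine ⟨(Submodule.mem_orthogonal _ _).mpr ?_, hJHW _ (hPmem x)⟩
    rintro u ⟨y, ⟨hyL, hyA⟩, rfl⟩
    -- goal: ⟪P y, J (P x)⟫ = 0
    have hwx : x - reducedProj H W x ∈ W := keyA x hxA
    have hwy : y - reducedProj H W y ∈ W := keyA y hyA
    have e1 : ⟪y, hatJ H x⟫_ℂ = 0 :=
      (Submodule.mem_orthogonal _ _).mp (hLJ x hxL) y hyL
    have e2 : ⟪y, hatJ H (x - reducedProj H W x)⟫_ℂ = 0 := by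
      rw [inner_eq_zero_symm]
      exact memA.mp hyA _ hwx
    have e3 : ⟪y - reducedProj H W y, hatJ H x⟫_ℂ = 0 := by
      rw [inner_hatJ_right]
      exact neg_eq_zero.mpr (memA.mp hxA _ hwy)
    have e4 : ⟪y - reducedProj H W y, hatJ H (x - reducedProj H W x)⟫_ℂ = 0 := by
      rw [inner_hatJ_right]
      exact neg_eq_zero.mpr ((Submodule.mem_orthogonal' _ _).mp
        (hiso (Submodule.mem_map_of_mem hwy)) _ hwx)
    have expand : ⟪reducedProj H W y, hatJ H (reducedProj H W x)⟫_ℂ =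
        ⟪y, hatJ H x⟫_ℂ - ⟪y, hatJ H (x - reducedProj H W x)⟫_ℂ
          - ⟪y - reducedProj H W y, hatJ H x⟫_ℂ
          + ⟪y - reducedProj H W y, hatJ H (x - reducedProj H W x)⟫_ℂ := by
      simp only [map_sub, inner_sub_left, inner_sub_right]
      ring
    show ⟪reducedProj H W y, hatJ H (reducedProj H W x)⟫_ℂ = 0
    rw [expand, e1, e2, e3, e4]
    ring
  · rintro ⟨hzperp, hzHW⟩
    have hJz_HW : hatJ H z ∈ reducedSpace H W := hJHW z hzHW
    -- z is orthogonal to all of L ⊓ annihilator W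
    have hzLA : ∀ v, v ∈ L → v ∈ annihilator H W → ⟪v, z⟫_ℂ = 0 := by
      intro v hvL hvA
      have h1 : ⟪reducedProj H W v, z⟫_ℂ = 0 :=
        (Submodule.mem_orthogonal _ _).mp hzperp _
          (Submodule.mem_map_of_mem (f := (reducedProj H W).toLinearMap) ⟨hvL, hvA⟩)
      have h2 : ⟪v - reducedProj H W v, z⟫_ℂ = 0 :=
        (memHW.mp hzHW).1 _ (keyA v hvA)
      have : ⟪v, z⟫_ℂ = ⟪v - reducedProj H W v, z⟫_ℂ + ⟪reducedProj H W v, z⟫_ℂ := by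
        rw [← inner_add_left]
        congr 1
        abel
      rw [this, h1, h2, add_zero]
    -- J z ∈ L ⊔ W
    haveI : CompleteSpace (L ⊔ W : Submodule ℂ (Hh H)) := hclosed.completeSpace_coe
    have hJzLW : hatJ H z ∈ L ⊔ W := by
      rw [← Submodule.orthogonal_orthogonal (L ⊔ W)]
      refine (Submodule.mem_orthogonal _ _).mpr fun u hu => ?_
      rw [← Submodule.inf_orthogonal] at hu
      obtain ⟨huL, huW⟩ := hu
      rw [← hL] at huL
      obtain ⟨v, hvL, rfl⟩ := huL
      show ⟪hatJ H v, hatJ H z⟫_ℂ = 0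
      rw [inner_hatJ_hatJ]
      refine hzLA v hvL (memA.mpr fun w hw => ?_)
      have : ⟪w, hatJ H v⟫_ℂ = 0 :=
        (Submodule.mem_orthogonal _ _).mp huW w hw
      rw [inner_hatJ_right] at this
      linear_combination -this
    obtain ⟨v, hvL, w, hwW, hvw⟩ := Submodule.mem_sup.mp hJzLW
    have hvA : v ∈ annihilator H W := by
      have hveq : v = hatJ H z - w := by rw [← hvw]; abel
      rw [hveq]
      exact Submodule.sub_mem _ (hHWA hJz_HW) (hWA hwW)
    have hPv : reducedProj H W v = hatJ H z := by
      have h := congrArg (reducedProj H W) hvw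
      rwa [map_add, hPzero w (Submodule.mem_sup_left hwW), add_zero, hPHW _ hJz_HW] at h
    refine ⟨reducedProj H W (-v), ⟨-v, ⟨L.neg_mem hvL, Submodule.neg_mem _ hvA⟩, rfl⟩, ?_⟩
    rw [map_neg, hPv]
    show hatJ H (-(hatJ H z)) = z
    rw [map_neg, hatJ_hatJ, neg_neg]
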